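/- Let α be a composition, b_1,…,b_m positive integers, and let i_1 < i_2 < … < i_m and j_1 < j_2 < … < j_m be two strictly increasing sequences of positive integers. Then the number of T ∈ SetCompTab(α) whose content is supported on {i_1,…,i_m} with exactly b_l occurrences of i_l for each l equals the number of T ∈ SetCompTab(α) whose content is supported on {j_1,…,j_m} with exactly b_l occurrences of j_l for each l. Equivalently, the quasisymmetric Grothendieck function G_α = Σ_{T ∈ SetCompTab(α)} β^{|T|−|α|} x^{content(T)} is a quasisymmetric function. -/
import Mathlib


open Finset MvPolynomial

/-- The inversion-triple condition on anchor values `b, a, c`: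
`b > c ≥ a` or `c ≥ a > b`. -/
def InvTriple (b a c : ℕ) : Prop := (c < b ∧ a ≤ c) ∨ (a ≤ c ∧ b < a)

/-- A set-valued filling of the composition shape `α` (row `i : Fin k` is the `(i+1)`-st
row): box `(i, j)` for `1 ≤ j ≤ α i` carries a nonempty finite set of positive integers;
boxes outside the shape (including the column `j = 0`: there is no basement) are empty. -/
structure SVCompTab (k : ℕ) (α : Fin k → ℕ) where
  box : Fin k → ℕ → Finset ℕ
  nonempty : ∀ i : Fin k, ∀ j : ℕ, 1 ≤ j → j ≤ α i → (box i j).Nonempty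
  pos : ∀ i : Fin k, ∀ j : ℕ, ∀ e ∈ box i j, 1 ≤ e
  outside : ∀ i : Fin k, ∀ j : ℕ, (j = 0 ∨ α i < j) → box i j = ∅

namespace SVCompTab

variable {k : ℕ} {α : Fin k → ℕ}

/-- The anchor (= largest) entry of box `(i, j)`. -/
def anchor (T : SVCompTab k α) (i : Fin k) (j : ℕ) : ℕ := (T.box i j).sup id

/-- Semistandardness conditions (Q1)-(Q3) for set-valued composition tableaux. -/
def IsSemistandard (T : SVCompTab k α) : Prop :=
  (∀ i : Fin k, ∀ j : ℕ, 2 ≤ j → j ≤ α i →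
      ∀ a ∈ T.box i (j - 1), ∀ b ∈ T.box i j, b ≤ a) ∧
  (∀ i i' : Fin k, i < i' → 1 ≤ α i → 1 ≤ α i' → T.anchor i 1 < T.anchor i' 1) ∧
  (∀ j : ℕ, 1 ≤ j → ∀ i i' : Fin k, i ≠ i' → j ≤ α i → j ≤ α i' →
      T.anchor i j ≠ T.anchor i' j) ∧
  (∀ i i' : Fin k, i < i' →
      (α i' ≤ α i → ∀ m : ℕ, 1 ≤ m → m + 1 ≤ α i' →
        InvTriple (T.anchor i' (m + 1)) (T.anchor i (m + 1)) (T.anchor i m)) ∧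
      (α i < α i' → ∀ m : ℕ, 1 ≤ m → m ≤ α i → m + 1 ≤ α i' →
        InvTriple (T.anchor i m) (T.anchor i' (m + 1)) (T.anchor i' m))) ∧
  (∀ i : Fin k, ∀ j : ℕ, 1 ≤ j → j ≤ α i → ∀ e ∈ T.box i j, e ≠ T.anchor i j →
      ∀ i' : Fin k, i' < i → j ≤ α i' →
        ¬ (e < T.anchor i' j ∧ (j = α i' ∨ T.anchor i' (j + 1) ≤ e)))

/-- The number of boxes of `T` containing the value `v`. -/
def content (T : SVCompTab k α) (v : ℕ) : ℕ :=
  ∑ i : Fin k, ((Finset.Icc 1 (α i)).filter (fun j => v ∈ T.box i j)).card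

/-- `|T|`, the total number of entries of `T`. -/
def size (T : SVCompTab k α) : ℕ :=
  ∑ i : Fin k, ∑ j ∈ Finset.Icc 1 (α i), (T.box i j).card

end SVCompTab

section Relabel

variable {k m : ℕ} {α : Fin k → ℕ}

/-- The relabeling function sending `u l` to `v l` and fixing everything else. -/
noncomputable def relabelF (u v : Fin m → ℕ) : ℕ → ℕ :=
  fun x => if h : ∃ l, u l = x then v h.choose else x

lemma relabelF_apply {u : Fin m → ℕ} (v : Fin m → ℕ) (hu : StrictMono u) (l : Fin m) :
    relabelF u v (u l) = v l := by
  have h : ∃ l', u l' = u l := ⟨l, rfl⟩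
  simp only [relabelF, dif_pos h]
  exact congrArg v (hu.injective h.choose_spec)

lemma relabelF_pos {u v : Fin m → ℕ} (hv1 : ∀ l, 1 ≤ v l) :
    ∀ x, 1 ≤ x → 1 ≤ relabelF u v x := by
  intro x hx
  unfold relabelF
  split
  · exact hv1 _
  · exact hx

lemma relabelF_le_iff {u v : Fin m → ℕ} (hu : StrictMono u) (hv : StrictMono v)
    {x y : ℕ} (hx : ∃ l, x = u l) (hy : ∃ l, y = u l) :
    relabelF u v x ≤ relabelF u v y ↔ x ≤ y := by
  obtain ⟨a, rfl⟩ := hx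
  obtain ⟨c, rfl⟩ := hy
  rw [relabelF_apply v hu, relabelF_apply v hu, hv.le_iff_le, hu.le_iff_le]

lemma relabelF_lt_iff {u v : Fin m → ℕ} (hu : StrictMono u) (hv : StrictMono v)
    {x y : ℕ} (hx : ∃ l, x = u l) (hy : ∃ l, y = u l) :
    relabelF u v x < relabelF u v y ↔ x < y := by
  obtain ⟨a, rfl⟩ := hx
  obtain ⟨c, rfl⟩ := hy
  rw [relabelF_apply v hu, relabelF_apply v hu, hv.lt_iff_lt, hu.lt_iff_lt]

lemma relabelF_eq_iff {u v : Fin m → ℕ} (hu : StrictMono u) (hv : StrictMono v)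
    {x y : ℕ} (hx : ∃ l, x = u l) (hy : ∃ l, y = u l) :
    relabelF u v x = relabelF u v y ↔ x = y := by
  obtain ⟨a, rfl⟩ := hx
  obtain ⟨c, rfl⟩ := hy
  rw [relabelF_apply v hu, relabelF_apply v hu, hv.injective.eq_iff, hu.injective.eq_iff]

/-- Relabel all entries of a tableau by `f`. -/
noncomputable def relabelTab (f : ℕ → ℕ) (hf : ∀ x, 1 ≤ x → 1 ≤ f x) (T : SVCompTab k α) :
    SVCompTab k α where
  box i j := (T.box i j).image f
  nonempty i j h1 h2 := (T.nonempty i j h1 h2).image f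
  pos i j e he := by
    obtain ⟨x, hx, rfl⟩ := Finset.mem_image.1 he
    exact hf x (T.pos i j x hx)
  outside i j h := by
    show (T.box i j).image f = ∅
    rw [T.outside i j h, Finset.image_empty]

lemma SVCompTab.ext' {T S : SVCompTab k α} (h : ∀ i j, T.box i j = S.box i j) : T = S := by
  obtain ⟨b1, _, _, _⟩ := T
  obtain ⟨b2, _, _, _⟩ := S
  have : b1 = b2 := funext fun i => funext fun j => h i j
  subst this
  rfl

lemma anchor_mem (T : SVCompTab k α) (i : Fin k) (j : ℕ) (h1 : 1 ≤ j) (h2 : j ≤ α i) :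
    T.anchor i j ∈ T.box i j := by
  obtain ⟨e, he, hx⟩ := Finset.exists_mem_eq_sup (T.box i j) (T.nonempty i j h1 h2) id
  rw [SVCompTab.anchor, hx]
  exact he

/-- All entries of a tableau with support condition lie in the range of `u`. -/
lemma supp_of_zero {u : Fin m → ℕ} {T : SVCompTab k α}
    (h0 : ∀ w, 1 ≤ w → (∀ l, w ≠ u l) → T.content w = 0) :
    ∀ i j, 1 ≤ j → j ≤ α i → ∀ e ∈ T.box i j, ∃ l, e = u l := by
  intro i j h1 h2 e he
  by_contra hc
  push_neg at hc
  have h0' := h0 e (T.pos i j e he) hc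
  unfold SVCompTab.content at h0'
  have hmem : j ∈ (Finset.Icc 1 (α i)).filter (fun j => e ∈ T.box i j) := by
    simp only [Finset.mem_filter, Finset.mem_Icc]
    exact ⟨⟨h1, h2⟩, he⟩
  have hz := Finset.sum_eq_zero_iff.mp h0' i (Finset.mem_univ i)
  rw [Finset.card_eq_zero] at hz
  rw [hz] at hmem
  exact absurd hmem (Finset.notMem_empty j)

section Main

variable {u v : Fin m → ℕ} (hu : StrictMono u) (hv : StrictMono v)
  (hv1 : ∀ l, 1 ≤ v l) {T : SVCompTab k α}
  (hsupp : ∀ i j, 1 ≤ j → j ≤ α i → ∀ e ∈ T.box i j, ∃ l, e = u l)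

include hu hv hv1 hsupp

lemma anchor_relabel (i : Fin k) (j : ℕ) (h1 : 1 ≤ j) (h2 : j ≤ α i) :
    (relabelTab (relabelF u v) (relabelF_pos hv1) T).anchor i j
      = relabelF u v (T.anchor i j) := by
  have hmem := anchor_mem T i j h1 h2
  apply le_antisymm
  · apply Finset.sup_le
    intro e' he'
    obtain ⟨e, he, rfl⟩ := Finset.mem_image.1 he'
    exact (relabelF_le_iff hu hv (hsupp _ _ h1 h2 _ he) (hsupp _ _ h1 h2 _ hmem)).2
      (Finset.le_sup (f := id) he)
  · exact Finset.le_sup (f := id) (Finset.mem_image_of_mem (relabelF u v) hmem)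

lemma semistandard_relabel (hss : T.IsSemistandard) :
    (relabelTab (relabelF u v) (relabelF_pos hv1) T).IsSemistandard := by
  obtain ⟨q1, q2a, q2b, q2c, q3⟩ := hss
  have hA : ∀ i j, 1 ≤ j → j ≤ α i → ∃ l, T.anchor i j = u l :=
    fun i j h1 h2 => hsupp i j h1 h2 _ (anchor_mem T i j h1 h2)
  have han := anchor_relabel hu hv hv1 hsupp
  have hinv : ∀ {x y z : ℕ}, (∃ l, x = u l) → (∃ l, y = u l) → (∃ l, z = u l) →
      InvTriple x y z → InvTriple (relabelF u v x) (relabelF u v y) (relabelF u v z) := by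
    rintro x y z hx hy hz (⟨h1, h2⟩ | ⟨h1, h2⟩)
    · exact Or.inl ⟨(relabelF_lt_iff hu hv hz hx).2 h1, (relabelF_le_iff hu hv hy hz).2 h2⟩
    · exact Or.inr ⟨(relabelF_le_iff hu hv hy hz).2 h1, (relabelF_lt_iff hu hv hx hy).2 h2⟩
  refine ⟨?_, ?_, ?_, ?_, ?_⟩
  · intro i j h2 hj a' ha' b' hb'
    obtain ⟨a, ha, rfl⟩ := Finset.mem_image.1 ha'
    obtain ⟨b, hb, rfl⟩ := Finset.mem_image.1 hb'
    exact (relabelF_le_iff hu hv (hsupp i j (by omega) hj b hb)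
      (hsupp i (j - 1) (by omega) (by omega) a ha)).2 (q1 i j h2 hj a ha b hb)
  · intro i i' hii h1 h1'
    rw [han i 1 le_rfl h1, han i' 1 le_rfl h1']
    exact (relabelF_lt_iff hu hv (hA i 1 le_rfl h1) (hA i' 1 le_rfl h1')).2
      (q2a i i' hii h1 h1')
  · intro j h1 i i' hne hji hji'
    rw [han i j h1 hji, han i' j h1 hji']
    intro heq
    exact q2b j h1 i i' hne hji hji'
      ((relabelF_eq_iff hu hv (hA i j h1 hji) (hA i' j h1 hji')).1 heq)
  · intro i i' hii
    refine ⟨?_, ?_⟩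
    · intro hle mm hm hm1
      rw [han i' (mm + 1) (by omega) hm1, han i (mm + 1) (by omega) (le_trans hm1 hle),
        han i mm hm (by omega)]
      exact hinv (hA i' (mm + 1) (by omega) hm1) (hA i (mm + 1) (by omega) (le_trans hm1 hle))
        (hA i mm hm (by omega)) ((q2c i i' hii).1 hle mm hm hm1)
    · intro hlt mm hm hmi hm1
      rw [han i mm hm hmi, han i' (mm + 1) (by omega) hm1, han i' mm hm (by omega)]
      exact hinv (hA i mm hm hmi) (hA i' (mm + 1) (by omega) hm1)
        (hA i' mm hm (by omega)) ((q2c i i' hii).2 hlt mm hm hmi hm1)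
  · intro i j h1 h2 e' he' hne i' hii' hji'
    obtain ⟨e, he, rfl⟩ := Finset.mem_image.1 he'
    have hEe := hsupp i j h1 h2 e he
    have hne' : e ≠ T.anchor i j := by
      intro h
      rw [han i j h1 h2] at hne
      exact hne (congrArg (relabelF u v) h)
    have hq := q3 i j h1 h2 e he hne' i' hii' hji'
    rintro ⟨hlt, hcase⟩
    apply hq
    refine ⟨?_, ?_⟩
    · rw [han i' j h1 hji'] at hlt
      exact (relabelF_lt_iff hu hv hEe (hA i' j h1 hji')).1 hlt
    · by_cases hjα : j = α i'
      · exact Or.inl hjα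
      · rcases hcase with h | h
        · exact Or.inl h
        · have hj1 : j + 1 ≤ α i' := by omega
          rw [han i' (j + 1) (by omega) hj1] at h
          exact Or.inr ((relabelF_le_iff hu hv (hA i' (j + 1) (by omega) hj1) hEe).1 h)

lemma content_relabel (l : Fin m) :
    (relabelTab (relabelF u v) (relabelF_pos hv1) T).content (v l) = T.content (u l) := by
  unfold SVCompTab.content
  refine Finset.sum_congr rfl fun i _ => ?_
  congr 1
  apply Finset.filter_congr
  intro j hj
  rw [Finset.mem_Icc] at hj
  show v l ∈ (T.box i j).image (relabelF u v) ↔ u l ∈ T.box i j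
  constructor
  · rintro he
    obtain ⟨e, he, hfe⟩ := Finset.mem_image.1 he
    obtain ⟨a, rfl⟩ := hsupp i j hj.1 hj.2 e he
    rw [relabelF_apply v hu] at hfe
    rwa [hv.injective hfe] at he
  · intro he
    exact Finset.mem_image.2 ⟨u l, he, relabelF_apply v hu l⟩

lemma content_relabel_zero (w : ℕ) (hw : ∀ l, w ≠ v l) :
    (relabelTab (relabelF u v) (relabelF_pos hv1) T).content w = 0 := by
  unfold SVCompTab.content
  refine Finset.sum_eq_zero fun i _ => ?_
  rw [Finset.card_eq_zero, Finset.filter_eq_empty_iff]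
  intro j hj
  rw [Finset.mem_Icc] at hj
  intro hwmem
  obtain ⟨e, he, hfe⟩ := Finset.mem_image.1 hwmem
  obtain ⟨a, rfl⟩ := hsupp i j hj.1 hj.2 e he
  rw [relabelF_apply v hu] at hfe
  exact hw a hfe.symm

omit hv1 in
lemma relabel_relabel (hu1 : ∀ l, 1 ≤ u l) (hv1' : ∀ l, 1 ≤ v l) :
    relabelTab (relabelF v u) (relabelF_pos hu1)
      (relabelTab (relabelF u v) (relabelF_pos hv1') T) = T := by
  apply SVCompTab.ext'
  intro i j
  show ((T.box i j).image (relabelF u v)).image (relabelF v u) = T.box i j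
  rw [Finset.image_image]
  by_cases h : 1 ≤ j ∧ j ≤ α i
  · have : ∀ e ∈ T.box i j, (relabelF v u ∘ relabelF u v) e = id e := by
      intro e he
      obtain ⟨a, rfl⟩ := hsupp i j h.1 h.2 e he
      simp only [Function.comp_apply, id_eq, relabelF_apply v hu, relabelF_apply u hv]
    rw [Finset.image_congr this, Finset.image_id]
  · rw [T.outside i j (by omega), Finset.image_empty]

end Main

end Relabel

/-- (Quasisymmetry of the quasisymmetric Grothendieck function `G_α`.)
For a composition `α`, positive multiplicities `b_1, …, b_m`, and two strictly increasing
sequences of positive values `i_1 < … < i_m` and `j_1 < … < j_m`, the semistandard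
set-valued composition tableaux of shape `α` whose content is supported on `{i_1, …, i_m}`
with exactly `b_l` occurrences of `i_l` are equinumerous with those whose content is
supported on `{j_1, …, j_m}` with exactly `b_l` occurrences of `j_l`. -/
theorem stmt11 (k m : ℕ) (hk : 1 ≤ k) (α : Fin k → ℕ) (hα : ∀ i, 1 ≤ α i)
    (b : Fin m → ℕ) (hb : ∀ l, 1 ≤ b l)
    (iseq jseq : Fin m → ℕ) (hi : StrictMono iseq) (hj : StrictMono jseq)
    (hi1 : ∀ l, 1 ≤ iseq l) (hj1 : ∀ l, 1 ≤ jseq l) :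
    Nat.card {T : SVCompTab k α // T.IsSemistandard ∧
        (∀ l : Fin m, T.content (iseq l) = b l) ∧
        (∀ v : ℕ, 1 ≤ v → (∀ l : Fin m, v ≠ iseq l) → T.content v = 0)} =
    Nat.card {T : SVCompTab k α // T.IsSemistandard ∧
        (∀ l : Fin m, T.content (jseq l) = b l) ∧
        (∀ v : ℕ, 1 ≤ v → (∀ l : Fin m, v ≠ jseq l) → T.content v = 0)} := by
  refine Nat.card_congr
    ⟨fun ⟨T, hss, hc, h0⟩ =>
        ⟨relabelTab (relabelF iseq jseq) (relabelF_pos hj1) T,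
          semistandard_relabel hi hj hj1 (supp_of_zero h0) hss,
          fun l => (content_relabel hi hj hj1 (supp_of_zero h0) l).trans (hc l),
          fun w _ hwne => content_relabel_zero hi hj hj1 (supp_of_zero h0) w hwne⟩,
      fun ⟨T, hss, hc, h0⟩ =>
        ⟨relabelTab (relabelF jseq iseq) (relabelF_pos hi1) T,
          semistandard_relabel hj hi hi1 (supp_of_zero h0) hss,
          fun l => (content_relabel hj hi hi1 (supp_of_zero h0) l).trans (hc l),
          fun w _ hwne => content_relabel_zero hj hi hi1 (supp_of_zero h0) w hwne⟩,
      ?_, ?_⟩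
  · rintro ⟨T, hss, hc, h0⟩
    exact Subtype.ext (relabel_relabel hi hj (supp_of_zero h0) hi1 hj1)
  · rintro ⟨T, hss, hc, h0⟩
    exact Subtype.ext (relabel_relabel hj hi (supp_of_zero h0) hj1 hi1)
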